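/- Let X and Y be real Hilbert spaces, F : X → Y Fréchet differentiable at x_n ∈ X, and let x ∈ X, y, y^δ ∈ Y, δ ≥ 0, c_tc ≥ 0 satisfy F(x) = y, ‖y^δ − y‖ ≤ δ and ‖F(x) − F(x_n) − F'(x_n)(x − x_n)‖ ≤ c_tc ‖F(x) − F(x_n)‖. Define the residual R_n := F(x_n) − y^δ, the Landweber search direction u_n := F'(x_n)* R_n, and set α_n := ⟨u_n, x_n⟩ − ‖R_n‖², ξ_n := ‖R_n‖ (δ + c_tc (‖R_n‖ + δ)). Then |⟨u_n, x⟩ − α_n| ≤ ξ_n; that is, every solution of F(x) = y satisfying the tangential cone estimate lies in the stripe H(u_n, α_n, ξ_n). -/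
import Mathlib

open RealInnerProductSpace

/-- RESESOP stripe containment for the Landweber search direction: with residual
`R_n = F(x_n) − y^δ`, search direction `u_n = F'(x_n)* R_n`,
`α_n = ⟪u_n, x_n⟫ − ‖R_n‖²` and `ξ_n = ‖R_n‖ (δ + c_tc(‖R_n‖ + δ))`, every
solution `x` of `F(x) = y` satisfying the tangential cone estimate lies in the
stripe `H(u_n, α_n, ξ_n)`. -/
theorem solution_in_stripe_landweber_direction
    {X Y : Type*} [NormedAddCommGroup X] [InnerProductSpace ℝ X] [CompleteSpace X]
    [NormedAddCommGroup Y] [InnerProductSpace ℝ Y] [CompleteSpace Y]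
    (F : X → Y) (xn : X) (F' : X →L[ℝ] Y) (hF : HasFDerivAt F F' xn)
    (x : X) (y yδ : Y) (δ ctc : ℝ) (hδ : 0 ≤ δ) (hctc : 0 ≤ ctc)
    (hsol : F x = y) (hnoise : ‖yδ - y‖ ≤ δ)
    (htc : ‖F x - F xn - F' (x - xn)‖ ≤ ctc * ‖F x - F xn‖) :
    |⟪(ContinuousLinearMap.adjoint F') (F xn - yδ), x⟫ -
        (⟪(ContinuousLinearMap.adjoint F') (F xn - yδ), xn⟫ - ‖F xn - yδ‖ ^ 2)| ≤
      ‖F xn - yδ‖ * (δ + ctc * (‖F xn - yδ‖ + δ)) := by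
  set R := F xn - yδ with hR
  have key : ⟪(ContinuousLinearMap.adjoint F') R, x⟫ -
      (⟪(ContinuousLinearMap.adjoint F') R, xn⟫ - ‖R‖ ^ 2)
      = ⟪R, F' (x - xn) + R⟫ := by
    rw [ContinuousLinearMap.adjoint_inner_left, ContinuousLinearMap.adjoint_inner_left,
      map_sub, inner_add_right, inner_sub_right, real_inner_self_eq_norm_sq]
    ring
  rw [key]
  have h1 : |⟪R, F' (x - xn) + R⟫| ≤ ‖R‖ * ‖F' (x - xn) + R‖ :=
    abs_real_inner_le_norm _ _
  have h2 : F' (x - xn) + R = (y - yδ) - (F x - F xn - F' (x - xn)) := by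
    rw [hR, ← hsol]; abel
  have h3 : ‖F' (x - xn) + R‖ ≤ δ + ctc * (‖R‖ + δ) := by
    rw [h2]
    calc ‖(y - yδ) - (F x - F xn - F' (x - xn))‖
        ≤ ‖y - yδ‖ + ‖F x - F xn - F' (x - xn)‖ := norm_sub_le _ _
      _ ≤ δ + ctc * ‖F x - F xn‖ := by
          gcongr
          rwa [norm_sub_rev]
      _ ≤ δ + ctc * (‖R‖ + δ) := by
          gcongr
          calc ‖F x - F xn‖ = ‖(y - yδ) + (yδ - F xn)‖ := by rw [hsol]; congr 1; abel
            _ ≤ ‖y - yδ‖ + ‖yδ - F xn‖ := norm_add_le _ _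
            _ = ‖y - yδ‖ + ‖R‖ := by rw [hR, norm_sub_rev yδ (F xn)]
            _ ≤ δ + ‖R‖ := by rw [norm_sub_rev y yδ]; gcongr
            _ = ‖R‖ + δ := by ring
  exact h1.trans (by gcongr)
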